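/- Assume a(i,i) = 2 for all i ∈ I. Let ν^1,…,ν^p ∈ I be pairwise distinct and let ν̃ ∈ I^n be the block tuple with ν̃_k = ν^i for c_{i−1} < k ≤ c_i. Set N_i := L(ν^i) − Σ_{r=1}^{i−1} b_r · a(ν^i, ν^r) for 1 ≤ i ≤ p (so N_i = N(1, ν̃, c_{i−1}+1)). Then Σ_{w ∈ S(ν̃,ν̃)} ∏_{t=1}^{n} N(w, ν̃, t) = ∏_{i=1}^{p} ( b_i! · ∏_{j=0}^{b_i−1} (N_i − j) ). Moreover, if in addition a(i,j) ≤ 0 for all i ≠ j and L(i) ≥ 0 for all i, then this quantity is nonzero if and only if N_i ≥ b_i for every 1 ≤ i ≤ p. (This is the combinatorial content of Theorem 5.2 of the paper, computing dim e(ν̃)R^Λ(β)e(ν̃).) -/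

import Mathlib

/-- `N(w,ν,t) = L(ν_t) − Σ_{j ∈ J_w^{<t}} a(ν_t, ν_j)`, where
`J_w^{<t} = {j < t : w(j) < w(t)}`. -/
def Nfun {I : Type*} (a : I → I → ℤ) (L : I → ℤ) {n : ℕ}
    (w : Equiv.Perm (Fin n)) (ν : Fin n → I) (t : Fin n) : ℤ :=
  L (ν t) - ∑ j ∈ Finset.univ.filter (fun j => j < t ∧ w j < w t), a (ν t) (ν j)


open Finset Equiv

def dcount {m : ℕ} (σ : Equiv.Perm (Fin m)) (s : Fin m) : ℕ :=
  (Finset.univ.filter (fun j => j < s ∧ σ j < σ s)).card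

def insPerm {m : ℕ} (v : Fin (m + 1)) (τ : Equiv.Perm (Fin m)) : Equiv.Perm (Fin (m + 1)) :=
  (finSuccEquiv' (Fin.last m)).trans ((Equiv.optionCongr τ).trans (finSuccEquiv' v).symm)

lemma insPerm_last {m : ℕ} (v : Fin (m+1)) (τ : Equiv.Perm (Fin m)) :
    insPerm v τ (Fin.last m) = v := by
  simp [insPerm, finSuccEquiv'_at]

lemma insPerm_castSucc {m : ℕ} (v : Fin (m+1)) (τ : Equiv.Perm (Fin m)) (j : Fin m) :
    insPerm v τ (Fin.castSucc j) = v.succAbove (τ j) := by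
  simp [insPerm, ← Fin.succAbove_last, finSuccEquiv'_succAbove]

lemma insPerm_bijective {m : ℕ} :
    Function.Bijective (fun x : Fin (m+1) × Equiv.Perm (Fin m) => insPerm x.1 x.2) := by
  rw [Fintype.bijective_iff_injective_and_card]
  constructor
  · rintro ⟨v, τ⟩ ⟨v', τ'⟩ h
    simp only at h
    have hv : v = v' := by
      rw [← insPerm_last v τ, ← insPerm_last v' τ', h]
    subst hv
    have hτ : τ = τ' := by
      ext j
      have := congrArg (fun w : Equiv.Perm (Fin (m+1)) => w (Fin.castSucc j)) h
      simp only [insPerm_castSucc] at this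
      exact congrArg Fin.val (Fin.succAbove_right_injective this)
    subst hτ; rfl
  · simp [Fintype.card_perm, Nat.factorial_succ]

lemma dcount_insPerm_last {m : ℕ} (v : Fin (m+1)) (τ : Equiv.Perm (Fin m)) :
    dcount (insPerm v τ) (Fin.last m) = (v : ℕ) := by
  unfold dcount
  rw [insPerm_last]
  have : (Finset.univ.filter (fun j => j < Fin.last m ∧ insPerm v τ j < v))
      = (Finset.univ.filter (fun x : Fin (m+1) => x < v)).image (insPerm v τ).symm := by
    ext j
    simp only [mem_filter, mem_univ, true_and, mem_image]
    constructor
    · intro ⟨_, h2⟩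
      exact ⟨insPerm v τ j, h2, Equiv.symm_apply_apply _ _⟩
    · rintro ⟨x, hx, rfl⟩
      constructor
      · rw [Fin.lt_last_iff_ne_last]
        intro h
        have := congrArg (insPerm v τ) h
        rw [Equiv.apply_symm_apply, insPerm_last] at this
        exact absurd (this ▸ hx) (lt_irrefl v)
      · rwa [Equiv.apply_symm_apply]
  rw [this, Finset.card_image_of_injective _ (Equiv.injective _)]
  have : (Finset.univ.filter (fun x : Fin (m+1) => x < v)) = Finset.Iio v := by
    ext x; simp [Finset.mem_Iio]
  rw [this, Fin.card_Iio]

lemma dcount_insPerm_castSucc {m : ℕ} (v : Fin (m+1)) (τ : Equiv.Perm (Fin m)) (s : Fin m) :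
    dcount (insPerm v τ) (Fin.castSucc s) = dcount τ s := by
  unfold dcount
  rw [insPerm_castSucc]
  have : (Finset.univ.filter (fun j => j < Fin.castSucc s ∧ insPerm v τ j < v.succAbove (τ s)))
      = (Finset.univ.filter (fun j => j < s ∧ τ j < τ s)).image Fin.castSucc := by
    ext j
    simp only [mem_filter, mem_univ, true_and, mem_image]
    constructor
    · intro ⟨h1, h2⟩
      have hne : j ≠ Fin.last m := by
        intro h; subst h
        exact absurd (h1.trans_le (Fin.le_last _)) (lt_irrefl _)
      obtain ⟨j₀, rfl⟩ := Fin.exists_castSucc_eq.mpr hne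
      refine ⟨j₀, ⟨?_, ?_⟩, rfl⟩
      · exact Fin.castSucc_lt_castSucc_iff.mp h1
      · rw [insPerm_castSucc] at h2
        exact Fin.succAbove_lt_succAbove_iff.mp h2
    · rintro ⟨j₀, ⟨h1, h2⟩, rfl⟩
      refine ⟨Fin.castSucc_lt_castSucc_iff.mpr h1, ?_⟩
      rw [insPerm_castSucc]
      exact Fin.succAbove_lt_succAbove_iff.mpr h2
  rw [this, Finset.card_image_of_injective _ (Fin.castSucc_injective m)]

lemma sum_perm_prod (m : ℕ) (X : ℤ) :
    ∑ σ : Equiv.Perm (Fin m), ∏ s : Fin m, (X - 2 * (dcount σ s : ℤ))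
      = (m.factorial : ℤ) * ∏ j ∈ Finset.range m, (X - (j : ℤ)) := by
  induction m generalizing X with
  | zero => simp
  | succ m ih =>
    have hbij := insPerm_bijective (m := m)
    rw [← Fintype.sum_bijective _ hbij _
      (fun σ : Equiv.Perm (Fin (m+1)) => ∏ s : Fin (m+1), (X - 2 * (dcount σ s : ℤ)))
      (fun x => rfl)]
    have hterm : ∀ (x : Fin (m+1) × Equiv.Perm (Fin m)),
        (∏ s : Fin (m+1), (X - 2 * (dcount (insPerm x.1 x.2) s : ℤ)))
        = (∏ s : Fin m, (X - 2 * (dcount x.2 s : ℤ))) * (X - 2 * (x.1 : ℤ)) := by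
      rintro ⟨v, τ⟩
      rw [Fin.prod_univ_castSucc]
      congr 1
      · exact Finset.prod_congr rfl fun s _ => by rw [dcount_insPerm_castSucc]
      · rw [dcount_insPerm_last]
    rw [Finset.sum_congr rfl (fun x _ => hterm x), Fintype.sum_prod_type_right]
    have hrange : ∀ M : ℕ, ∑ v ∈ Finset.range M, (X - 2 * (v:ℤ)) = M * (X - M + 1) := by
      intro M
      induction M with
      | zero => simp
      | succ M ihM =>
        rw [Finset.sum_range_succ, ihM]
        push_cast; ring
    have hv : ∑ v : Fin (m+1), (X - 2 * (v : ℤ)) = ((m:ℤ) + 1) * (X - m) := by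
      rw [Fin.sum_univ_eq_sum_range (fun v => X - 2 * (v:ℤ)), hrange]
      push_cast; ring
    simp only [← Finset.mul_sum]
    rw [hv]
    rw [← Finset.sum_mul, ih X, Finset.prod_range_succ, Nat.factorial_succ]
    push_cast; ring


section Extract
variable {p : ℕ} {B : Fin p → ℕ}

lemma sigma_apply_eq (u : Equiv.Perm (Σ i : Fin p, Fin (B i)))
    (hu : ∀ k, (u k).1 = k.1) (i : Fin p) (s : Fin (B i)) :
    u ⟨i, s⟩ = ⟨i, Fin.cast (congrArg B (hu ⟨i, s⟩)) (u ⟨i, s⟩).2⟩ := by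
  refine Sigma.ext (hu ⟨i, s⟩) ?_
  exact ((Fin.heq_ext_iff (congrArg B (hu ⟨i, s⟩))).mpr rfl).symm.symm

lemma inv_fst_eq (u : Equiv.Perm (Σ i : Fin p, Fin (B i)))
    (hu : ∀ k, (u k).1 = k.1) : ∀ k, (u⁻¹ k).1 = k.1 := by
  intro k
  have := hu (u⁻¹ k)
  rw [Equiv.Perm.coe_inv, Equiv.apply_symm_apply] at this
  exact this.symm

def extract (u : Equiv.Perm (Σ i : Fin p, Fin (B i)))
    (hu : ∀ k, (u k).1 = k.1) (i : Fin p) : Equiv.Perm (Fin (B i)) where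
  toFun s := Fin.cast (congrArg B (hu ⟨i, s⟩)) (u ⟨i, s⟩).2
  invFun s := Fin.cast (congrArg B (inv_fst_eq u hu ⟨i, s⟩)) (u⁻¹ ⟨i, s⟩).2
  left_inv s := by
    apply Fin.ext
    simp only [Fin.coe_cast]
    have h1 : (⟨i, Fin.cast (congrArg B (hu ⟨i, s⟩)) (u ⟨i, s⟩).2⟩ : Σ i, Fin (B i)) = u ⟨i, s⟩ :=
      (sigma_apply_eq u hu i s).symm
    rw [h1, Equiv.Perm.coe_inv, Equiv.symm_apply_apply]
  right_inv s := by
    apply Fin.ext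
    simp only [Fin.coe_cast]
    have h1 : (⟨i, Fin.cast (congrArg B (inv_fst_eq u hu ⟨i, s⟩)) (u⁻¹ ⟨i, s⟩).2⟩ : Σ i, Fin (B i))
        = u⁻¹ ⟨i, s⟩ := (sigma_apply_eq u⁻¹ (inv_fst_eq u hu) i s).symm
    rw [h1, Equiv.Perm.coe_inv, Equiv.apply_symm_apply]

lemma sigmaCongrRight_extract (u : Equiv.Perm (Σ i : Fin p, Fin (B i)))
    (hu : ∀ k, (u k).1 = k.1) :
    Equiv.sigmaCongrRight (extract u hu) = u := by
  apply Equiv.ext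
  rintro ⟨i, s⟩
  rw [Equiv.sigmaCongrRight_apply]
  exact (sigma_apply_eq u hu i s).symm

lemma extract_sigmaCongrRight (σ : ∀ i : Fin p, Equiv.Perm (Fin (B i)))
    (hu : ∀ k, ((Equiv.sigmaCongrRight σ) k).1 = k.1) :
    extract (Equiv.sigmaCongrRight σ) hu = σ := by
  funext i
  ext s
  simp only [extract, Equiv.coe_fn_mk, Fin.coe_cast, Equiv.sigmaCongrRight_apply]
  rfl

end Extract


/-- Theorem 5.2 of the paper (combinatorial form): for the block tuple `ν̃` built from
pairwise distinct `ν^1,…,ν^p` with block sizes `b_1,…,b_p`, and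
`N_i = L(ν^i) − Σ_{r<i} b_r·a(ν^i, ν^r)`, one has
`Σ_{w ∈ S(ν̃,ν̃)} ∏_t N(w,ν̃,t) = ∏_i (b_i! · ∏_{j=0}^{b_i−1} (N_i − j))`;
moreover, if `a(i,j) ≤ 0` for `i ≠ j` and `L ≥ 0`, this is nonzero iff `N_i ≥ b_i` for
all `i`. -/
theorem stmt13 {I : Type*} [DecidableEq I] (a : I → I → ℤ) (L : I → ℤ)
    (ha : ∀ i, a i i = 2)
    (n p : ℕ) (hp : 1 ≤ p)
    (b : ℕ → ℕ) (hbpos : ∀ i < p, 0 < b i)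
    (c : ℕ → ℕ) (hc : ∀ i, c i = ∑ j ∈ Finset.range i, b j) (hcp : c p = n)
    (nb : ℕ → I) (hdist : ∀ i < p, ∀ j < p, i ≠ j → nb i ≠ nb j)
    (ν : Fin n → I)
    (hν : ∀ i < p, ∀ k : Fin n, c i ≤ (k : ℕ) → (k : ℕ) < c (i + 1) → ν k = nb i)
    (Ni : ℕ → ℤ)
    (hNi : ∀ i, Ni i = L (nb i) - ∑ r ∈ Finset.range i, (b r : ℤ) * a (nb i) (nb r)) :
    (∑ w ∈ Finset.univ.filter (fun w : Equiv.Perm (Fin n) => ∀ k, ν (w⁻¹ k) = ν k),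
        ∏ t : Fin n, Nfun a L w ν t
      = ∏ i ∈ Finset.range p,
          (((b i).factorial : ℤ) * ∏ j ∈ Finset.range (b i), (Ni i - (j : ℤ))))
    ∧ ((∀ i j, i ≠ j → a i j ≤ 0) → (∀ i, 0 ≤ L i) →
        ((∑ w ∈ Finset.univ.filter
              (fun w : Equiv.Perm (Fin n) => ∀ k, ν (w⁻¹ k) = ν k),
            ∏ t : Fin n, Nfun a L w ν t) ≠ 0
          ↔ ∀ i < p, (b i : ℤ) ≤ Ni i)) := by
  classical
  -- basic facts about c
  have hcs : ∀ i, c (i + 1) = c i + b i := by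
    intro i; rw [hc, hc, Finset.sum_range_succ]
  have hcm : ∀ {i j : ℕ}, i ≤ j → c i ≤ c j := by
    intro i j hij
    rw [hc, hc]
    exact Finset.sum_le_sum_of_subset (Finset.range_subset_range.mpr hij)
  -- the equivalence e
  have hbound : ∀ k : Σ i : Fin p, Fin (b i.val), c k.1.val + k.2.val < n := by
    rintro ⟨i, s⟩
    show c i.val + s.val < n
    have h1 : c i.val + s.val < c (i.val + 1) := by
      rw [hcs]; exact Nat.add_lt_add_left s.2 _
    have h2 : c (i.val + 1) ≤ c p := hcm i.2
    omega
  have hlt : ∀ (i i' : Fin p) (s' : Fin (b i'.val)), i'.val < i.val →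
      c i'.val + s'.val < c i.val := by
    intro i i' s' h
    have h1 : c i'.val + s'.val < c (i'.val + 1) := by
      rw [hcs]; exact Nat.add_lt_add_left s'.2 _
    have h2 : c (i'.val + 1) ≤ c i.val := hcm h
    omega
  have hkey : ∀ (i i' : Fin p) (s : Fin (b i.val)) (s' : Fin (b i'.val)),
      c i'.val + s'.val < c i.val + s.val ↔
        (i'.val < i.val ∨ (i'.val = i.val ∧ s'.val < s.val)) := by
    intro i i' s s'
    constructor
    · intro h
      rcases lt_trichotomy i'.val i.val with h1 | h1 | h1
      · exact Or.inl h1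
      · right
        refine ⟨h1, ?_⟩
        have : c i'.val = c i.val := by rw [h1]
        omega
      · exfalso
        have := hlt i' i s h1
        omega
    · rintro (h1 | ⟨h1, h2⟩)
      · have := hlt i i' s' h1
        omega
      · have : c i'.val = c i.val := by rw [h1]
        omega
  obtain ⟨e, he⟩ : ∃ e : (Σ i : Fin p, Fin (b i.val)) ≃ Fin n,
      ∀ (i : Fin p) (s : Fin (b i.val)), (e ⟨i, s⟩ : ℕ) = c i.val + s.val := by
    refine ⟨Equiv.ofBijective (fun k => ⟨c k.1.val + k.2.val, hbound k⟩) ?_, fun i s => rfl⟩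
    rw [Fintype.bijective_iff_injective_and_card]
    constructor
    · rintro ⟨i, s⟩ ⟨i', s'⟩ h
      have h' : c i.val + s.val = c i'.val + s'.val := congrArg Fin.val h
      have h1 : i = i' := by
        by_contra hne
        rcases lt_trichotomy i.val i'.val with hx | hx | hx
        · have := (hkey i' i s' s).mpr (Or.inl hx); omega
        · exact hne (Fin.ext hx)
        · have := (hkey i i' s s').mpr (Or.inl hx); omega
      subst h1
      have h2 : s = s' := by
        apply Fin.ext; omega
      rw [h2]
    · rw [Fintype.card_sigma, Fintype.card_fin]
      simp only [Fintype.card_fin]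
      rw [Fin.sum_univ_eq_sum_range (fun r => b r) p, ← hc, hcp]
  have horder : ∀ (i i' : Fin p) (s : Fin (b i.val)) (s' : Fin (b i'.val)),
      e ⟨i', s'⟩ < e ⟨i, s⟩ ↔ (i'.val < i.val ∨ (i'.val = i.val ∧ s'.val < s.val)) := by
    intro i i' s s'
    rw [Fin.lt_def, he, he]
    exact hkey i i' s s'
  have hν' : ∀ (i : Fin p) (s : Fin (b i.val)), ν (e ⟨i, s⟩) = nb i.val := by
    intro i s
    apply hν i.val i.2
    · rw [he]; omega
    · rw [he, hcs]
      have := s.2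
      omega
  -- inverse of transported permutation
  have hpcinv : ∀ (u : Equiv.Perm (Σ i : Fin p, Fin (b i.val))) (k : Fin n),
      (Equiv.permCongr e u)⁻¹ k = e (u⁻¹ (e.symm k)) := fun u k => rfl
  have hpc : ∀ (u : Equiv.Perm (Σ i : Fin p, Fin (b i.val)))
      (k : Σ i : Fin p, Fin (b i.val)),
      (Equiv.permCongr e u) (e k) = e (u k) := by
    intro u k
    rw [Equiv.permCongr_apply, Equiv.symm_apply_apply]
  -- stabilizer condition transfer
  have hPQ : ∀ u : Equiv.Perm (Σ i : Fin p, Fin (b i.val)),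
      (∀ k, ν ((Equiv.permCongr e u)⁻¹ k) = ν k) ↔ (∀ k, (u k).1 = k.1) := by
    intro u
    constructor
    · intro h k
      obtain ⟨i, s⟩ := k
      have h2 := h (e (u ⟨i, s⟩))
      rw [hpcinv, Equiv.symm_apply_apply, Equiv.Perm.coe_inv, Equiv.symm_apply_apply] at h2
      rw [← Sigma.eta (u ⟨i, s⟩)] at h2
      rw [hν' i s, hν' (u ⟨i, s⟩).1 (u ⟨i, s⟩).2] at h2
      by_contra hne
      exact hdist i.val i.2 (u ⟨i, s⟩).1.val (u ⟨i, s⟩).1.2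
        (fun hv => hne (Fin.ext hv.symm)) h2
    · intro h k
      rw [hpcinv]
      obtain ⟨⟨i, s⟩, rfl⟩ : ∃ k', e k' = k := ⟨e.symm k, e.apply_symm_apply k⟩
      rw [Equiv.symm_apply_apply]
      rw [sigma_apply_eq u⁻¹ (inv_fst_eq u h) i s]
      rw [hν', hν']
  -- main equality
  have key : (∑ w ∈ Finset.univ.filter (fun w : Equiv.Perm (Fin n) => ∀ k, ν (w⁻¹ k) = ν k),
        ∏ t : Fin n, Nfun a L w ν t)
      = ∏ i ∈ Finset.range p,
          (((b i).factorial : ℤ) * ∏ j ∈ Finset.range (b i), (Ni i - (j : ℤ))) := by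
    rw [Finset.sum_filter]
    rw [← Equiv.sum_comp (Equiv.permCongr e)
      (fun w => if (∀ k, ν (w⁻¹ k) = ν k) then ∏ t : Fin n, Nfun a L w ν t else 0)]
    rw [Finset.sum_congr rfl (fun u _ => if_congr (hPQ u) rfl rfl)]
    rw [← Finset.sum_filter]
    -- transfer to product of permutation groups
    have hbij2 : (∑ u ∈ Finset.univ.filter
          (fun u : Equiv.Perm (Σ i : Fin p, Fin (b i.val)) => ∀ k, (u k).1 = k.1),
        ∏ t : Fin n, Nfun a L (Equiv.permCongr e u) ν t)
        = ∑ σ : ∀ i : Fin p, Equiv.Perm (Fin (b i.val)),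
            ∏ t : Fin n, Nfun a L (Equiv.permCongr e (Equiv.sigmaCongrRight σ)) ν t := by
      refine Finset.sum_bij'
        (fun u hu => extract u (Finset.mem_filter.mp hu).2)
        (fun σ _ => Equiv.sigmaCongrRight σ)
        (fun u hu => Finset.mem_univ _)
        (fun σ _ => Finset.mem_filter.mpr ⟨Finset.mem_univ _, fun k => rfl⟩)
        (fun u hu => sigmaCongrRight_extract u _)
        (fun σ _ => extract_sigmaCongrRight σ _)
        (fun u hu => by rw [sigmaCongrRight_extract u _])
    rw [hbij2]
    -- evaluate each term
    have hterm : ∀ (σ : ∀ i : Fin p, Equiv.Perm (Fin (b i.val))) (i : Fin p)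
        (s : Fin (b i.val)),
        Nfun a L (Equiv.permCongr e (Equiv.sigmaCongrRight σ)) ν (e ⟨i, s⟩)
          = Ni i.val - 2 * (dcount (σ i) s : ℤ) := by
      intro σ i s
      unfold Nfun
      rw [hν' i s]
      rw [Finset.sum_filter]
      rw [← Equiv.sum_comp e (fun j =>
        if (j < e ⟨i, s⟩ ∧ Equiv.permCongr e (Equiv.sigmaCongrRight σ) j
            < Equiv.permCongr e (Equiv.sigmaCongrRight σ) (e ⟨i, s⟩))
        then a (nb i.val) (ν j) else 0)]
      rw [← Finset.univ_sigma_univ, Finset.sum_sigma]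
      have hinner : ∀ i' : Fin p,
          (∑ s' : Fin (b i'.val), if (e ⟨i', s'⟩ < e ⟨i, s⟩ ∧
              Equiv.permCongr e (Equiv.sigmaCongrRight σ) (e ⟨i', s'⟩)
                < Equiv.permCongr e (Equiv.sigmaCongrRight σ) (e ⟨i, s⟩))
            then a (nb i.val) (ν (e ⟨i', s'⟩)) else 0)
          = if i'.val < i.val then (b i'.val : ℤ) * a (nb i.val) (nb i'.val)
            else if i'.val = i.val then 2 * (dcount (σ i) s : ℤ) else 0 := by
        intro i'
        rcases lt_trichotomy i'.val i.val with hcase | hcase | hcase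
        · rw [if_pos hcase]
          rw [Finset.sum_congr rfl (fun s' _ => by
            rw [if_pos ⟨(horder i i' s s').mpr (Or.inl hcase), by
              rw [hpc, hpc, Equiv.sigmaCongrRight_apply, Equiv.sigmaCongrRight_apply]
              exact (horder i i' (σ i s) (σ i' s')).mpr (Or.inl hcase)⟩, hν' i' s'])]
          rw [Finset.sum_const, Finset.card_univ, Fintype.card_fin, nsmul_eq_mul]
        · have hii : i' = i := Fin.ext hcase
          subst hii
          rw [if_neg (lt_irrefl _), if_pos rfl]
          have hcond : ∀ s' : Fin (b i'.val),
              ((e ⟨i', s'⟩ < e ⟨i', s⟩ ∧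
                Equiv.permCongr e (Equiv.sigmaCongrRight σ) (e ⟨i', s'⟩)
                  < Equiv.permCongr e (Equiv.sigmaCongrRight σ) (e ⟨i', s⟩)))
              ↔ (s' < s ∧ σ i' s' < σ i' s) := by
            intro s'
            rw [hpc, hpc, Equiv.sigmaCongrRight_apply, Equiv.sigmaCongrRight_apply]
            rw [horder i' i' s s', horder i' i' (σ i' s) (σ i' s')]
            simp only [lt_irrefl, false_or, eq_self_iff_true, true_and]
            rw [Fin.lt_def, Fin.lt_def]
          rw [Finset.sum_congr rfl (fun s' _ => by
            rw [if_congr (hcond s') rfl rfl, hν' i' s', ha])]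
          rw [← Finset.sum_filter, Finset.sum_const, nsmul_eq_mul, mul_comm]
          first
          | rfl
          | (congr 1; unfold dcount; norm_cast)
          | (unfold dcount; norm_cast)
        · rw [if_neg (by omega), if_neg (by omega)]
          apply Finset.sum_eq_zero
          intro s' _
          rw [if_neg]
          rintro ⟨h1, -⟩
          rcases (horder i i' s s').mp h1 with h2 | ⟨h2, -⟩ <;> omega
      rw [Finset.sum_congr rfl (fun i' _ => hinner i')]
      rw [Fin.sum_univ_eq_sum_range (fun r => if r < i.val then (b r : ℤ) * a (nb i.val) (nb r)
        else if r = i.val then 2 * (dcount (σ i) s : ℤ) else 0) p]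
      have hsplit : ∀ r ∈ Finset.range p,
          (if r < i.val then (b r : ℤ) * a (nb i.val) (nb r)
            else if r = i.val then 2 * (dcount (σ i) s : ℤ) else 0)
          = (if r < i.val then (b r : ℤ) * a (nb i.val) (nb r) else 0)
            + (if r = i.val then 2 * (dcount (σ i) s : ℤ) else 0) := by
        intro r _
        by_cases h1 : r < i.val
        · simp only [if_pos h1, if_neg (show ¬ r = i.val by omega)]
          ring
        · by_cases h2 : r = i.val
          · simp only [if_neg h1, if_pos h2]
            ring
          · simp only [if_neg h1, if_neg h2]
            ring
      rw [Finset.sum_congr rfl hsplit, Finset.sum_add_distrib]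
      rw [Finset.sum_ite_eq' (Finset.range p) i.val
        (fun _ => 2 * (dcount (σ i) s : ℤ)), if_pos (Finset.mem_range.mpr i.2)]
      rw [← Finset.sum_filter]
      have hfilt : (Finset.range p).filter (· < i.val) = Finset.range i.val := by
        ext r
        simp only [Finset.mem_filter, Finset.mem_range]
        have := i.2
        omega
      rw [hfilt, hNi]
      ring
    have hGσ : ∀ σ : ∀ i : Fin p, Equiv.Perm (Fin (b i.val)),
        (∏ t : Fin n, Nfun a L (Equiv.permCongr e (Equiv.sigmaCongrRight σ)) ν t)
        = ∏ i : Fin p, ∏ s : Fin (b i.val), (Ni i.val - 2 * (dcount (σ i) s : ℤ)) := by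
      intro σ
      rw [← Equiv.prod_comp e
        (fun t => Nfun a L (Equiv.permCongr e (Equiv.sigmaCongrRight σ)) ν t)]
      rw [← Finset.univ_sigma_univ, Finset.prod_sigma]
      exact Finset.prod_congr rfl fun i _ => Finset.prod_congr rfl fun s _ => hterm σ i s
    rw [Finset.sum_congr rfl (fun σ _ => hGσ σ)]
    rw [← Fintype.piFinset_univ, ← Finset.prod_univ_sum
      (fun i : Fin p => (Finset.univ : Finset (Equiv.Perm (Fin (b i.val)))))
      (fun (i : Fin p) (σi : Equiv.Perm (Fin (b i.val))) =>
        ∏ s : Fin (b i.val), (Ni i.val - 2 * (dcount σi s : ℤ)))]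
    rw [Finset.prod_congr rfl (fun i _ => sum_perm_prod (b i.val) (Ni i.val))]
    exact Fin.prod_univ_eq_prod_range
      (fun r => ((b r).factorial : ℤ) * ∏ j ∈ Finset.range (b r), (Ni r - (j : ℤ))) p
  refine ⟨key, fun hneg hL => ?_⟩
  rw [key]
  -- nonvanishing criterion
  have hNnonneg : ∀ i < p, 0 ≤ Ni i := by
    intro i hi
    rw [hNi]
    have hsum : (∑ r ∈ Finset.range i, (b r : ℤ) * a (nb i) (nb r)) ≤ 0 := by
      apply Finset.sum_nonpos
      intro r hr
      rw [Finset.mem_range] at hr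
      have hne : nb i ≠ nb r := hdist i hi r (by omega) (by omega)
      have h1 : a (nb i) (nb r) ≤ 0 := hneg (nb i) (nb r) hne
      have h2 : (0 : ℤ) ≤ (b r : ℤ) := Int.natCast_nonneg _
      exact mul_nonpos_of_nonneg_of_nonpos h2 h1
    have := hL (nb i)
    omega
  rw [Finset.prod_ne_zero_iff]
  constructor
  · intro h i hi
    have h2 := h i (Finset.mem_range.mpr hi)
    by_contra hlt
    push_neg at hlt
    have h0 : 0 ≤ Ni i := hNnonneg i hi
    apply h2
    rw [mul_eq_zero]
    right
    apply Finset.prod_eq_zero (Finset.mem_range.mpr (show (Ni i).toNat < b i by omega))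
    omega
  · intro h i hi
    rw [Finset.mem_range] at hi
    apply mul_ne_zero
    · exact_mod_cast (Nat.factorial_ne_zero _)
    · rw [Finset.prod_ne_zero_iff]
      intro j hj
      rw [Finset.mem_range] at hj
      have := h i hi
      omega
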